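/- Let a be a probability distribution with V(a) > 0, let (t_n) be a moderate sequence, and for x ∈ ℝ set k_n(a,x) = exp( n·H(a) + x·n·t_n ). Then: (i) for every x ≤ 0, lim_{n→∞} (1/(n t_n²)) · ln[ ∑_i { (a^{⊗n})_i : (a^{⊗n})_i ≥ 1/k_n(a,x) } ] = −x²/(2 V(a)); and (ii) for every x ≥ 0, lim_{n→∞} (1/(n t_n²)) · ln[ ∑_i { (a^{⊗n})_i : (a^{⊗n})_i ≤ 1/k_n(a,x) } ] = −x²/(2 V(a)). Here each sum runs over all entries of a^{⊗n} satisfying the stated magnitude condition. -/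

import Mathlib

open Finset Filter Real Topology

noncomputable section

/-- A probability distribution on a finite type: nonnegative entries summing to 1. -/
def IsProbDist {α : Type*} [Fintype α] (a : α → ℝ) : Prop :=
  (∀ i, 0 ≤ a i) ∧ ∑ i, a i = 1

/-- A sharp distribution: a single entry equal to 1, all others 0. -/
def IsSharp {α : Type*} [Fintype α] (a : α → ℝ) : Prop :=
  ∃ i, a i = 1 ∧ ∀ j, j ≠ i → a j = 0

/-- The uniform distribution: all entries equal to `1 / |α|`. -/
def IsUniform {α : Type*} [Fintype α] (a : α → ℝ) : Prop :=
  ∀ i, a i = 1 / (Fintype.card α : ℝ)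

/-- Tensor (Kronecker) product of two vectors. -/
def tensor {α β : Type*} (a : α → ℝ) (b : β → ℝ) : α × β → ℝ :=
  fun x => a x.1 * b x.2

/-- `n`-fold tensor power of a vector. -/
def tpow {α : Type*} (a : α → ℝ) (n : ℕ) : (Fin n → α) → ℝ :=
  fun f => ∏ j, a (f j)

/-- Shannon entropy (natural logarithm, with the convention `0 · ln 0 = 0`). -/
def shannonH {α : Type*} [Fintype α] (a : α → ℝ) : ℝ :=
  -∑ i, a i * Real.log (a i)

/-- Entropy variance `V(a) = ∑ i, a i (ln a i + H(a))²`. -/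
def entV {α : Type*} [Fintype α] (a : α → ℝ) : ℝ :=
  ∑ i, a i * (Real.log (a i) + shannonH a) ^ 2

/-- Relative entropy `D(a‖b)`. -/
def relD {α : Type*} [Fintype α] (a b : α → ℝ) : ℝ :=
  ∑ i, a i * Real.log (a i / b i)

/-- Relative entropy variance `V(a‖b)`. -/
def relV {α : Type*} [Fintype α] (a b : α → ℝ) : ℝ :=
  ∑ i, a i * (Real.log (a i / b i) - relD a b) ^ 2

/-- Total variation distance. -/
def tvd {α : Type*} [Fintype α] (a b : α → ℝ) : ℝ :=
  (1 / 2) * ∑ i, |a i - b i|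

/-- Fidelity `F(a,b) = (∑ i √(a i · b i))²`. -/
def fid {α : Type*} [Fintype α] (a b : α → ℝ) : ℝ :=
  (∑ i, Real.sqrt (a i * b i)) ^ 2

/-- The entries of `a` sorted in non-increasing order, as a vector on `Fin (card α)`. -/
def descSorted {α : Type*} [Fintype α] (a : α → ℝ) : Fin (Fintype.card α) → ℝ :=
  fun i =>
    a ((Fintype.equivFin α).symm
      (Tuple.sort (fun j => -a ((Fintype.equivFin α).symm j)) i))

/-- `headSum a K = ∑_{1 ≤ i ≤ K} a^↓_i` (1-based indices `i`, comparison `(i : ℝ) ≤ K`,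
equivalently `i ≤ ⌊K⌋`). -/
def headSum {α : Type*} [Fintype α] (a : α → ℝ) (K : ℝ) : ℝ :=
  ∑ i ∈ Finset.univ.filter (fun i : Fin (Fintype.card α) => ((i : ℕ) + 1 : ℝ) ≤ K),
    descSorted a i

/-- `tailSum a K = ∑_{i ≥ K} a^↓_i` (1-based indices `i`, comparison `K ≤ (i : ℝ)`,
equivalently `i ≥ ⌈K⌉`). -/
def tailSum {α : Type*} [Fintype α] (a : α → ℝ) (K : ℝ) : ℝ :=
  ∑ i ∈ Finset.univ.filter (fun i : Fin (Fintype.card α) => K ≤ ((i : ℕ) + 1 : ℝ)),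
    descSorted a i

/-- `a` majorises `b` (written `a ≻ b`): every partial sum of the non-increasingly sorted
`a` dominates the corresponding partial sum of sorted `b` (shorter vectors padded with zeros). -/
def Maj {α β : Type*} [Fintype α] [Fintype β] (a : α → ℝ) (b : β → ℝ) : Prop :=
  ∀ j : ℕ, headSum b (j : ℝ) ≤ headSum a (j : ℝ)

/-- `a ≻_ε b`: approximate majorisation (from above) with total variation error:
there is a probability distribution `b̃` with `a ≻ b̃` and `δ(b, b̃) ≤ ε`. -/
def ApproxMajTV {α β : Type*} [Fintype α] [Fintype β] (a : α → ℝ) (b : β → ℝ) (ε : ℝ) : Prop :=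
  ∃ bt : β → ℝ, IsProbDist bt ∧ Maj a bt ∧ tvd b bt ≤ ε

/-- `a ≺_ε b`: approximate majorisation (from below) with total variation error:
there is a probability distribution `b̃` with `a ≺ b̃` and `δ(b, b̃) ≤ ε`. -/
def ApproxSubMajTV {α β : Type*} [Fintype α] [Fintype β] (a : α → ℝ) (b : β → ℝ) (ε : ℝ) : Prop :=
  ∃ bt : β → ℝ, IsProbDist bt ∧ Maj bt a ∧ tvd b bt ≤ ε

/-- A moderate sequence: `t n → 0` and `√n · t n → +∞`. -/
def ModerateSeq (t : ℕ → ℝ) : Prop :=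
  Tendsto t atTop (𝓝 0) ∧ Tendsto (fun n : ℕ => Real.sqrt (n : ℝ) * t n) atTop atTop

/-- The uniform distribution on `Fin d`. -/
def unif (d : ℕ) : Fin d → ℝ := fun _ => 1 / (d : ℝ)

/-- The embedding map `Γ` associated with `γ_i = c_i / N`: for each `i` it produces
`c_i` entries equal to `a_i / c_i`. -/
def embed {d : ℕ} (c : Fin d → ℕ) (a : Fin d → ℝ) : (Σ i : Fin d, Fin (c i)) → ℝ :=
  fun x => a x.1 / (c x.1 : ℝ)

/-- Cut-and-pile modification of the sorted version of `a`, with cut at `K`: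
the first entry absorbs the total mass of entries at (1-based) positions `≥ K`,
entries at positions `1 < i < K` are unchanged, and entries at positions `≥ K` are set to 0. -/
def cutAndPile {α : Type*} [Fintype α] (a : α → ℝ) (K : ℝ) : Fin (Fintype.card α) → ℝ :=
  fun i =>
    if (i : ℕ) = 0 then descSorted a i + tailSum a K
    else if ((i : ℕ) + 1 : ℝ) < K then descSorted a i else 0

namespace MDAux

lemma sum_filter_congr_zero {ι : Type*} [Fintype ι] (g : ι → ℝ) (p q : ι → Prop)
    [DecidablePred p] [DecidablePred q] (h : ∀ i, g i ≠ 0 → (p i ↔ q i)) :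
    ∑ i ∈ Finset.univ.filter p, g i = ∑ i ∈ Finset.univ.filter q, g i := by
  rw [Finset.sum_filter, Finset.sum_filter]
  refine Finset.sum_congr rfl fun i _ => ?_
  by_cases hg : g i = 0
  · simp [hg]
  · simp [h i hg]

lemma markov {ι : Type*} [Fintype ι] (w X : ι → ℝ) (hw : ∀ i, 0 ≤ w i) {r : ℝ} (hr : 0 < r) :
    ∑ i ∈ Finset.univ.filter (fun i => r ≤ |X i|), w i ≤ (∑ i, w i * (X i)^2) / r^2 := by
  rw [le_div_iff₀ (by positivity)]
  calc (∑ i ∈ Finset.univ.filter (fun i => r ≤ |X i|), w i) * r^2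
      = ∑ i ∈ Finset.univ.filter (fun i => r ≤ |X i|), w i * r^2 := Finset.sum_mul ..
    _ ≤ ∑ i ∈ Finset.univ.filter (fun i => r ≤ |X i|), w i * (X i)^2 := by
        refine Finset.sum_le_sum fun i hi => ?_
        have hXi := (Finset.mem_filter.1 hi).2
        have : r^2 ≤ (X i)^2 := by nlinarith [sq_abs (X i), abs_nonneg (X i)]
        exact mul_le_mul_of_nonneg_left this (hw i)
    _ ≤ ∑ i, w i * (X i)^2 := by
        refine Finset.sum_le_sum_of_subset_of_nonneg (Finset.filter_subset _ _)
          (fun i _ _ => mul_nonneg (hw i) (sq_nonneg _))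

section Moments
variable {d : ℕ} (b ℓ : Fin d → ℝ)

lemma sum_succ_decomp {n : ℕ} (F : (Fin (n+1) → Fin d) → ℝ) :
    ∑ f : Fin (n+1) → Fin d, F f
      = ∑ i : Fin d, ∑ f : Fin n → Fin d, F (Fin.cons (α := fun _ => Fin d) i f) := by
  rw [← (Fin.consEquiv (fun _ => Fin d)).sum_comp F, Fintype.sum_prod_type]
  rfl

lemma momA (hb : ∑ i, b i = 1) (n : ℕ) :
    ∑ f : Fin n → Fin d, ∏ j, b (f j) = 1 := by
  rw [← Fintype.sum_pow, hb, one_pow]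

lemma momB (hb : ∑ i, b i = 1) {m : ℝ} (hm : ∑ i, b i * ℓ i = m) (n : ℕ) :
    ∑ f : Fin n → Fin d, (∏ j, b (f j)) * ((∑ j, ℓ (f j)) - n * m) = 0 := by
  induction n with
  | zero => simp
  | succ n ih =>
    rw [sum_succ_decomp]
    have key : ∀ i : Fin d, ∑ f : Fin n → Fin d,
        (∏ j, b (Fin.cons (α := fun _ => Fin d) i f j))
          * ((∑ j, ℓ (Fin.cons (α := fun _ => Fin d) i f j)) - (n+1 : ℕ) * m)
        = b i * (ℓ i - m) * (∑ f : Fin n → Fin d, ∏ j, b (f j))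
          + b i * (∑ f : Fin n → Fin d, (∏ j, b (f j)) * ((∑ j, ℓ (f j)) - n * m)) := by
      intro i
      rw [Finset.mul_sum, Finset.mul_sum, ← Finset.sum_add_distrib]
      refine Finset.sum_congr rfl fun f _ => ?_
      rw [Fin.prod_univ_succ, Fin.sum_univ_succ]
      simp only [Fin.cons_zero, Fin.cons_succ]
      push_cast
      ring
    rw [Finset.sum_congr rfl fun i _ => key i]
    rw [momA b hb n, ih]
    simp only [mul_one, mul_zero, add_zero]
    have : ∑ i, b i * (ℓ i - m) = (∑ i, b i * ℓ i) - m * ∑ i, b i := by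
      rw [Finset.mul_sum, ← Finset.sum_sub_distrib]
      exact Finset.sum_congr rfl fun i _ => by ring
    rw [this, hm, hb]; ring

lemma momC (hb : ∑ i, b i = 1) {m v : ℝ} (hm : ∑ i, b i * ℓ i = m)
    (hv : ∑ i, b i * (ℓ i - m)^2 = v) (n : ℕ) :
    ∑ f : Fin n → Fin d, (∏ j, b (f j)) * ((∑ j, ℓ (f j)) - n * m)^2 = n * v := by
  induction n with
  | zero => simp
  | succ n ih =>
    rw [sum_succ_decomp]
    have key : ∀ i : Fin d, ∑ f : Fin n → Fin d,
        (∏ j, b (Fin.cons (α := fun _ => Fin d) i f j))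
          * ((∑ j, ℓ (Fin.cons (α := fun _ => Fin d) i f j)) - (n+1 : ℕ) * m)^2
        = b i * (ℓ i - m)^2 * (∑ f : Fin n → Fin d, ∏ j, b (f j))
          + 2 * (b i * (ℓ i - m)) *
              (∑ f : Fin n → Fin d, (∏ j, b (f j)) * ((∑ j, ℓ (f j)) - n * m))
          + b i * (∑ f : Fin n → Fin d, (∏ j, b (f j)) * ((∑ j, ℓ (f j)) - n * m)^2) := by
      intro i
      rw [Finset.mul_sum, Finset.mul_sum, Finset.mul_sum, ← Finset.sum_add_distrib,
        ← Finset.sum_add_distrib]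
      refine Finset.sum_congr rfl fun f _ => ?_
      rw [Fin.prod_univ_succ, Fin.sum_univ_succ]
      simp only [Fin.cons_zero, Fin.cons_succ]
      push_cast
      ring
    rw [Finset.sum_congr rfl fun i _ => key i]
    rw [momA b hb n, ih, momB b ℓ hb hm n]
    simp only [mul_one, mul_zero, add_zero]
    have : ∑ i, (b i * (ℓ i - m)^2 + b i * (n * v)) = v + n * v := by
      rw [Finset.sum_add_distrib, hv, ← Finset.sum_mul, hb]; ring
    rw [this]; push_cast; ring

end Moments


section Calc
variable {d : ℕ} (a ℓ : Fin d → ℝ)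

def Zf (lam : ℝ) : ℝ := ∑ i, a i * Real.exp (lam * ℓ i)
def Zd (lam : ℝ) : ℝ := ∑ i, (a i * ℓ i) * Real.exp (lam * ℓ i)
def psiF (lam : ℝ) : ℝ := Real.log (Zf a ℓ lam)
def muF : ℝ := ∑ i, a i * ℓ i
def VF : ℝ := ∑ i, a i * (ℓ i - muF a ℓ)^2
def tiltF (lam : ℝ) (i : Fin d) : ℝ := a i * Real.exp (lam * ℓ i) / Zf a ℓ lam
def tmF (lam : ℝ) : ℝ := ∑ i, tiltF a ℓ lam i * ℓ i
def tvF (lam : ℝ) : ℝ := ∑ i, tiltF a ℓ lam i * (ℓ i - tmF a ℓ lam)^2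

variable {a}

lemma exists_pos (ha : IsProbDist a) : ∃ i, 0 < a i := by
  by_contra h
  push_neg at h
  have h0 : ∑ i, a i = 0 := Finset.sum_eq_zero fun i _ => le_antisymm (h i) (ha.1 i)
  rw [ha.2] at h0
  norm_num at h0

lemma Zf_pos (ha : IsProbDist a) (lam : ℝ) : 0 < Zf a ℓ lam := by
  obtain ⟨i, hi⟩ := exists_pos ha
  refine Finset.sum_pos' (fun j _ => mul_nonneg (ha.1 j) (Real.exp_nonneg _)) ⟨i, Finset.mem_univ i, ?_⟩
  positivity

lemma Zf_zero (ha : IsProbDist a) : Zf a ℓ 0 = 1 := by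
  simp [Zf, ha.2]

lemma Zd_zero : Zd a ℓ 0 = muF a ℓ := by
  simp [Zd, muF]

lemma psiF_zero (ha : IsProbDist a) : psiF a ℓ 0 = 0 := by
  simp [psiF, Zf_zero ℓ ha]

lemma Zf_hasDerivAt (lam : ℝ) : HasDerivAt (Zf a ℓ) (Zd a ℓ lam) lam := by
  have h : ∀ i ∈ Finset.univ, HasDerivAt (fun x => a i * Real.exp (x * ℓ i))
      ((a i * ℓ i) * Real.exp (lam * ℓ i)) lam := by
    intro i _
    have := ((hasDerivAt_mul_const (x := lam) (ℓ i)).exp).const_mul (a i)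
    rw [show (a i * ℓ i) * Real.exp (lam * ℓ i) = a i * (Real.exp (lam * ℓ i) * ℓ i) by ring]
    exact this
  exact HasDerivAt.fun_sum h

lemma Zd_hasDerivAt (lam : ℝ) :
    HasDerivAt (Zd a ℓ) (∑ i, (a i * ℓ i * ℓ i) * Real.exp (lam * ℓ i)) lam := by
  have h : ∀ i ∈ Finset.univ, HasDerivAt (fun x => (a i * ℓ i) * Real.exp (x * ℓ i))
      ((a i * ℓ i * ℓ i) * Real.exp (lam * ℓ i)) lam := by
    intro i _
    have := ((hasDerivAt_mul_const (x := lam) (ℓ i)).exp).const_mul (a i * ℓ i)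
    rw [show (a i * ℓ i * ℓ i) * Real.exp (lam * ℓ i) = a i * ℓ i * (Real.exp (lam * ℓ i) * ℓ i) by ring]
    exact this
  exact HasDerivAt.fun_sum h

lemma psiF_hasDerivAt (ha : IsProbDist a) (lam : ℝ) :
    HasDerivAt (psiF a ℓ) (Zd a ℓ lam / Zf a ℓ lam) lam :=
  (Zf_hasDerivAt ℓ lam).log (ne_of_gt (Zf_pos ℓ ha lam))

lemma tmF_eq (lam : ℝ) : tmF a ℓ lam = Zd a ℓ lam / Zf a ℓ lam := by
  unfold tmF tiltF Zd
  rw [Finset.sum_div]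
  exact Finset.sum_congr rfl fun i _ => by ring

lemma tilt_nonneg (ha : IsProbDist a) (lam : ℝ) (i : Fin d) : 0 ≤ tiltF a ℓ lam i :=
  div_nonneg (mul_nonneg (ha.1 i) (Real.exp_nonneg _)) (Zf_pos ℓ ha lam).le

lemma tilt_sum (ha : IsProbDist a) (lam : ℝ) : ∑ i, tiltF a ℓ lam i = 1 := by
  unfold tiltF
  rw [← Finset.sum_div, div_eq_one_iff_eq (ne_of_gt (Zf_pos ℓ ha lam))]
  rfl

lemma VF_eq (ha : IsProbDist a) : VF a ℓ = (∑ i, a i * ℓ i ^ 2) - (muF a ℓ)^2 := by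
  have : ∀ i, a i * (ℓ i - muF a ℓ)^2
      = a i * ℓ i ^2 - (2 * muF a ℓ) * (a i * ℓ i) + (muF a ℓ)^2 * a i := fun i => by ring
  unfold VF
  rw [Finset.sum_congr rfl fun i _ => this i]
  rw [Finset.sum_add_distrib, Finset.sum_sub_distrib, ← Finset.mul_sum, ← Finset.mul_sum,
    ha.2]
  have hmu : ∑ i, a i * ℓ i = muF a ℓ := rfl
  rw [hmu]
  ring

lemma tendsto_tm (ha : IsProbDist a) :
    Tendsto (fun s => (tmF a ℓ s - muF a ℓ)/s) (𝓝[≠] (0:ℝ)) (𝓝 (VF a ℓ)) := by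
  set N : ℝ → ℝ := fun s => Zd a ℓ s - muF a ℓ * Zf a ℓ s with hN
  have hN0 : N 0 = 0 := by
    simp [hN, Zd_zero, Zf_zero ℓ ha]
  have hNd : HasDerivAt N ((∑ i, (a i * ℓ i * ℓ i) * Real.exp (0 * ℓ i))
      - muF a ℓ * Zd a ℓ 0) 0 :=
    (Zd_hasDerivAt ℓ 0).sub ((Zf_hasDerivAt ℓ 0).const_mul (muF a ℓ))
  have hval : (∑ i, (a i * ℓ i * ℓ i) * Real.exp (0 * ℓ i)) - muF a ℓ * Zd a ℓ 0 = VF a ℓ := by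
    rw [Zd_zero, VF_eq ℓ ha]
    simp only [zero_mul, Real.exp_zero, mul_one]
    have : ∀ i : Fin d, a i * ℓ i * ℓ i = a i * ℓ i ^ 2 := fun i => by ring
    rw [Finset.sum_congr rfl fun i _ => this i]
    ring
  rw [hval] at hNd
  have hslope : Tendsto (fun s => N s / s) (𝓝[≠] (0:ℝ)) (𝓝 (VF a ℓ)) := by
    have := hasDerivAt_iff_tendsto_slope.1 hNd
    refine this.congr fun s => ?_
    rw [slope_def_field, hN0, sub_zero, sub_zero]
  have hZinv : Tendsto (fun s => (Zf a ℓ s)⁻¹) (𝓝[≠] (0:ℝ)) (𝓝 1) := by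
    have hc : Tendsto (Zf a ℓ) (𝓝 (0:ℝ)) (𝓝 (Zf a ℓ 0)) :=
      (Zf_hasDerivAt ℓ 0).continuousAt.tendsto
    rw [Zf_zero ℓ ha] at hc
    have :=8
    have h2 := Tendsto.inv₀ (hc.mono_left
      (nhdsWithin_le_nhds : 𝓝[≠](0:ℝ) ≤ 𝓝 0)) one_ne_zero
    simpa using h2
  have := hslope.mul hZinv
  rw [mul_one] at this
  refine this.congr fun s => ?_
  rw [tmF_eq]
  have hz := ne_of_gt (Zf_pos ℓ ha s)
  field_simp
  ring

lemma tendsto_psi (ha : IsProbDist a) :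
    Tendsto (fun s => (psiF a ℓ s - muF a ℓ * s)/s^2) (𝓝[≠] (0:ℝ)) (𝓝 (VF a ℓ / 2)) := by
  apply HasDerivAt.lhopital_zero_nhdsNE
      (f' := fun s => Zd a ℓ s / Zf a ℓ s - muF a ℓ) (g' := fun s => 2 * s)
  · filter_upwards with s
    have h1 := psiF_hasDerivAt ℓ ha s
    have h2 : HasDerivAt (fun s : ℝ => muF a ℓ * s) (muF a ℓ) s := by
      simpa using (hasDerivAt_id s).const_mul (muF a ℓ)
    exact h1.sub h2
  · filter_upwards with s
    simpa using hasDerivAt_pow 2 s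
  · filter_upwards [self_mem_nhdsWithin] with s hs
    simpa using hs
  · have hc : Tendsto (fun s => psiF a ℓ s - muF a ℓ * s) (𝓝 (0:ℝ))
        (𝓝 (psiF a ℓ 0 - muF a ℓ * 0)) :=
      ((psiF_hasDerivAt ℓ ha 0).continuousAt.tendsto).sub
        (Continuous.tendsto (by continuity) 0)
    rw [psiF_zero ℓ ha] at hc
    simpa using hc.mono_left nhdsWithin_le_nhds
  · have : Tendsto (fun s : ℝ => s^2) (𝓝 (0:ℝ)) (𝓝 ((0:ℝ)^2)) :=
      Continuous.tendsto (by continuity) 0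
    simpa using this.mono_left nhdsWithin_le_nhds
  · have := (tendsto_tm ℓ ha).div_const 2
    refine this.congr fun s => ?_
    rw [tmF_eq]
    ring

end Calc

section Tail
variable {d : ℕ} {a : Fin d → ℝ} (ℓ : Fin d → ℝ)

lemma exp_npsi (ha : IsProbDist a) (lam : ℝ) (n : ℕ) :
    Real.exp ((n:ℝ) * psiF a ℓ lam) = (Zf a ℓ lam)^n := by
  rw [psiF, ← Real.log_pow, Real.exp_log (pow_pos (Zf_pos ℓ ha lam) n)]

lemma sum_w_exp (ha : IsProbDist a) (lam : ℝ) (n : ℕ) :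
    ∑ f : Fin n → Fin d, (∏ j, a (f j)) * Real.exp (lam * ∑ j, ℓ (f j))
      = (Zf a ℓ lam)^n := by
  rw [Zf, Fintype.sum_pow (fun i => a i * Real.exp (lam * ℓ i)) n]
  refine Finset.sum_congr rfl fun f _ => ?_
  rw [Finset.mul_sum, Real.exp_sum, ← Finset.prod_mul_distrib]

lemma chernoff (ha : IsProbDist a) {lam : ℝ} (hlam : 0 ≤ lam) (n : ℕ) (c : ℝ) :
    ∑ f ∈ Finset.univ.filter (fun f : Fin n → Fin d => c ≤ ∑ j, ℓ (f j)), ∏ j, a (f j)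
      ≤ Real.exp ((n:ℝ) * psiF a ℓ lam - lam * c) := by
  have h1 : ∀ f : Fin n → Fin d, 0 ≤ ∏ j, a (f j) :=
    fun f => Finset.prod_nonneg fun j _ => ha.1 (f j)
  calc ∑ f ∈ Finset.univ.filter (fun f : Fin n → Fin d => c ≤ ∑ j, ℓ (f j)), ∏ j, a (f j)
      ≤ ∑ f ∈ Finset.univ.filter (fun f : Fin n → Fin d => c ≤ ∑ j, ℓ (f j)),
          (∏ j, a (f j)) * (Real.exp (-lam * c) * Real.exp (lam * ∑ j, ℓ (f j))) := by
        refine Finset.sum_le_sum fun f hf => ?_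
        have hc := (Finset.mem_filter.1 hf).2
        rw [← Real.exp_add]
        refine le_mul_of_one_le_right (h1 f) (Real.one_le_exp ?_)
        nlinarith
    _ ≤ ∑ f : Fin n → Fin d,
          (∏ j, a (f j)) * (Real.exp (-lam * c) * Real.exp (lam * ∑ j, ℓ (f j))) := by
        refine Finset.sum_le_sum_of_subset_of_nonneg (Finset.filter_subset _ _) fun f _ _ => ?_
        have := h1 f
        positivity
    _ = Real.exp (-lam * c) * ∑ f : Fin n → Fin d,
          (∏ j, a (f j)) * Real.exp (lam * ∑ j, ℓ (f j)) := by
        rw [Finset.mul_sum]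
        exact Finset.sum_congr rfl fun f _ => by ring
    _ = Real.exp (-lam * c) * Real.exp ((n:ℝ) * psiF a ℓ lam) := by
        rw [sum_w_exp ℓ ha, exp_npsi ℓ ha]
    _ = Real.exp ((n:ℝ) * psiF a ℓ lam - lam * c) := by
        rw [← Real.exp_add]; ring_nf

lemma com (ha : IsProbDist a) (lam : ℝ) {n : ℕ} (f : Fin n → Fin d) :
    ∏ j, a (f j) = Real.exp ((n:ℝ) * psiF a ℓ lam)
      * ((∏ j, tiltF a ℓ lam (f j)) * Real.exp (-(lam * ∑ j, ℓ (f j)))) := by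
  have hZ := Zf_pos ℓ ha lam
  have h1 : ∏ j, tiltF a ℓ lam (f j)
      = (∏ j, a (f j)) * Real.exp (lam * ∑ j, ℓ (f j)) / (Zf a ℓ lam)^n := by
    unfold tiltF
    rw [Finset.prod_div_distrib, Finset.prod_const, Finset.card_univ, Fintype.card_fin,
      Finset.prod_mul_distrib, Finset.mul_sum, Real.exp_sum]
  rw [exp_npsi ℓ ha, h1]
  rw [Real.exp_neg]
  have hE := Real.exp_ne_zero (lam * ∑ j, ℓ (f j))
  field_simp

lemma tilt_prob (ha : IsProbDist a) (lam : ℝ) : IsProbDist (tiltF a ℓ lam) := by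
  constructor
  · exact fun i => div_nonneg (mul_nonneg (ha.1 i) (Real.exp_nonneg _)) (Zf_pos ℓ ha lam).le
  · unfold tiltF
    rw [← Finset.sum_div, div_eq_one_iff_eq (ne_of_gt (Zf_pos ℓ ha lam))]
    rfl

lemma tm_abs_le (ha : IsProbDist a) (lam : ℝ) {M : ℝ} (hM : ∀ i, |ℓ i| ≤ M) :
    |tmF a ℓ lam| ≤ M := by
  have hb := tilt_prob ℓ ha lam
  calc |tmF a ℓ lam| ≤ ∑ i, |tiltF a ℓ lam i * ℓ i| := Finset.abs_sum_le_sum_abs _ _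
    _ ≤ ∑ i, tiltF a ℓ lam i * M := by
        refine Finset.sum_le_sum fun i _ => ?_
        rw [abs_mul, abs_of_nonneg (hb.1 i)]
        exact mul_le_mul_of_nonneg_left (hM i) (hb.1 i)
    _ = M := by rw [← Finset.sum_mul, hb.2, one_mul]

lemma tv_le (ha : IsProbDist a) (lam : ℝ) {M : ℝ} (hM : ∀ i, |ℓ i| ≤ M) :
    tvF a ℓ lam ≤ 4 * M^2 := by
  have hb := tilt_prob ℓ ha lam
  have hm := tm_abs_le ℓ ha lam hM
  calc tvF a ℓ lam ≤ ∑ i, tiltF a ℓ lam i * (4 * M^2) := by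
        refine Finset.sum_le_sum fun i _ => ?_
        refine mul_le_mul_of_nonneg_left ?_ (hb.1 i)
        have h1 := hM i
        have h2 := abs_nonneg (ℓ i)
        have h3 := abs_le.1 h1
        have h4 := abs_le.1 hm
        nlinarith
    _ = 4 * M^2 := by rw [← Finset.sum_mul, hb.2, one_mul]


end Tail

section Lower
variable {d : ℕ} {a : Fin d → ℝ} (ℓ : Fin d → ℝ)

lemma lower_est (ha : IsProbDist a) {lam : ℝ} (hlam : 0 ≤ lam) {n : ℕ} {c c' r : ℝ}
    (hr : 0 < r)
    (hw1 : c ≤ (n:ℝ) * tmF a ℓ lam - r) (hw2 : (n:ℝ) * tmF a ℓ lam + r ≤ c')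
    (hvr : (n:ℝ) * tvF a ℓ lam / r^2 ≤ 1/2) :
    Real.exp ((n:ℝ) * psiF a ℓ lam - lam * c') * (1/2)
      ≤ ∑ f ∈ Finset.univ.filter (fun f : Fin n → Fin d => c ≤ ∑ j, ℓ (f j)),
          ∏ j, a (f j) := by
  have hb := tilt_prob ℓ ha lam
  set b := tiltF a ℓ lam with hbdef
  set m := tmF a ℓ lam with hmdef
  set G := Finset.univ.filter
    (fun f : Fin n → Fin d => |(∑ j, ℓ (f j)) - (n:ℝ) * m| < r) with hGdef
  have hBnn : ∀ f : Fin n → Fin d, 0 ≤ ∏ j, b (f j) :=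
    fun f => Finset.prod_nonneg fun j _ => hb.1 (f j)
  have hQ : (1:ℝ)/2 ≤ ∑ f ∈ G, ∏ j, b (f j) := by
    have hsplit := Finset.sum_filter_add_sum_filter_not Finset.univ
      (fun f : Fin n → Fin d => |(∑ j, ℓ (f j)) - (n:ℝ) * m| < r) (fun f => ∏ j, b (f j))
    have htot : ∑ f : Fin n → Fin d, ∏ j, b (f j) = 1 := momA b hb.2 n
    have hbad : ∑ f ∈ Finset.univ.filter
        (fun f : Fin n → Fin d => ¬ |(∑ j, ℓ (f j)) - (n:ℝ)*m| < r), ∏ j, b (f j) ≤ 1/2 := by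
      have heq : Finset.univ.filter
            (fun f : Fin n → Fin d => ¬ |(∑ j, ℓ (f j)) - (n:ℝ)*m| < r)
          = Finset.univ.filter
            (fun f : Fin n → Fin d => r ≤ |(∑ j, ℓ (f j)) - (n:ℝ)*m|) := by
        apply Finset.filter_congr
        intro f _
        simp [not_lt]
      rw [heq]
      calc ∑ f ∈ Finset.univ.filter
            (fun f : Fin n → Fin d => r ≤ |(∑ j, ℓ (f j)) - (n:ℝ)*m|), ∏ j, b (f j)
          ≤ (∑ f : Fin n → Fin d, (∏ j, b (f j)) * ((∑ j, ℓ (f j)) - (n:ℝ)*m)^2)/r^2 :=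
            markov _ _ hBnn hr
        _ = (n:ℝ) * tvF a ℓ lam / r^2 := by
            have h1 : ∑ i, b i * ℓ i = m := rfl
            have h2 : ∑ i, b i * (ℓ i - m)^2 = tvF a ℓ lam := rfl
            rw [momC b ℓ hb.2 h1 h2 n]
        _ ≤ 1/2 := hvr
    linarith
  calc Real.exp ((n:ℝ) * psiF a ℓ lam - lam * c') * (1/2)
      ≤ Real.exp ((n:ℝ) * psiF a ℓ lam - lam * c') * ∑ f ∈ G, ∏ j, b (f j) :=
        mul_le_mul_of_nonneg_left hQ (Real.exp_nonneg _)
    _ = ∑ f ∈ G, Real.exp ((n:ℝ) * psiF a ℓ lam - lam * c') * ∏ j, b (f j) :=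
        Finset.mul_sum ..
    _ ≤ ∑ f ∈ G, ∏ j, a (f j) := by
        refine Finset.sum_le_sum fun f hf => ?_
        have hfG := (Finset.mem_filter.1 hf).2
        have habs := abs_lt.1 hfG
        have hS : lam * (∑ j, ℓ (f j)) ≤ lam * c' :=
          mul_le_mul_of_nonneg_left (by linarith) hlam
        rw [com ℓ ha lam f, Real.exp_sub]
        have h2 : Real.exp (-(lam * c')) ≤ Real.exp (-(lam * ∑ j, ℓ (f j))) :=
          Real.exp_le_exp.2 (by linarith)
        calc Real.exp ((n:ℝ) * psiF a ℓ lam) / Real.exp (lam * c') * ∏ j, b (f j)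
            = Real.exp ((n:ℝ) * psiF a ℓ lam)
                * ((∏ j, b (f j)) * Real.exp (-(lam * c'))) := by
              rw [Real.exp_neg]; ring
          _ ≤ Real.exp ((n:ℝ) * psiF a ℓ lam)
                * ((∏ j, b (f j)) * Real.exp (-(lam * ∑ j, ℓ (f j)))) := by
              refine mul_le_mul_of_nonneg_left
                (mul_le_mul_of_nonneg_left h2 (hBnn f)) (Real.exp_nonneg _)
    _ ≤ ∑ f ∈ Finset.univ.filter (fun f : Fin n → Fin d => c ≤ ∑ j, ℓ (f j)),
          ∏ j, a (f j) := by
        refine Finset.sum_le_sum_of_subset_of_nonneg ?_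
          (fun f _ _ => Finset.prod_nonneg fun j _ => ha.1 (f j))
        intro f hf
        have hfG := abs_lt.1 (Finset.mem_filter.1 hf).2
        exact Finset.mem_filter.2 ⟨Finset.mem_univ f, by linarith⟩

end Lower

section Main
variable {d : ℕ} {a : Fin d → ℝ}

set_option maxHeartbeats 1600000 in
theorem tail_main (ℓ : Fin d → ℝ) (ha : IsProbDist a)
    (hV : 0 < VF a ℓ) (t : ℕ → ℝ)
    (ht0 : Tendsto t atTop (𝓝 0))
    (htpos : ∀ᶠ n in atTop, 0 < t n)
    (htop : Tendsto (fun n : ℕ => (n:ℝ) * t n ^ 2) atTop atTop)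
    (x : ℝ) (hx : 0 ≤ x) :
    Tendsto (fun n : ℕ =>
      Real.log (∑ f ∈ Finset.univ.filter
        (fun f : Fin n → Fin d => (n:ℝ) * muF a ℓ + x * (n:ℝ) * t n ≤ ∑ j, ℓ (f j)),
        ∏ j, a (f j)) / ((n:ℝ) * t n ^ 2)) atTop (𝓝 (-x^2 / (2 * VF a ℓ))) := by
  set V := VF a ℓ with hVdef
  set μ := muF a ℓ with hμdef
  set P : ℕ → ℝ := fun n => ∑ f ∈ Finset.univ.filter
      (fun f : Fin n → Fin d => (n:ℝ) * μ + x * (n:ℝ) * t n ≤ ∑ j, ℓ (f j)),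
      ∏ j, a (f j) with hPdef
  set M : ℝ := ∑ i, |ℓ i| with hMdef
  have hM : ∀ i, |ℓ i| ≤ M :=
    fun i => Finset.single_le_sum (fun j _ => abs_nonneg (ℓ j)) (Finset.mem_univ i)
  have hM0 : 0 ≤ M := Finset.sum_nonneg fun i _ => abs_nonneg _
  have hPnn : ∀ n, 0 ≤ P n :=
    fun n => Finset.sum_nonneg fun f _ => Finset.prod_nonneg fun j _ => ha.1 (f j)
  have hP1 : ∀ n, P n ≤ 1 := by
    intro n
    calc P n ≤ ∑ f : Fin n → Fin d, ∏ j, a (f j) :=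
          Finset.sum_le_sum_of_subset_of_nonneg (Finset.filter_subset _ _)
            (fun f _ _ => Finset.prod_nonneg fun j _ => ha.1 (f j))
      _ = 1 := momA a ha.2 n
  have hn1 : ∀ᶠ n : ℕ in atTop, (1:ℝ) ≤ (n:ℝ) := by
    filter_upwards [eventually_ge_atTop 1] with n hn
    exact_mod_cast hn
  have hnt : ∀ᶠ n : ℕ in atTop, 0 < (n:ℝ) * t n ^ 2 := htop.eventually_gt_atTop 0
  have hcompf : ∀ y : ℝ, y ≠ 0 → Tendsto (fun n : ℕ => y * t n) atTop (𝓝[≠] (0:ℝ)) := by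
    intro y hy
    rw [tendsto_nhdsWithin_iff]
    constructor
    · simpa using ht0.const_mul y
    · filter_upwards [htpos] with n hn
      simp only [Set.mem_compl_iff, Set.mem_singleton_iff]
      exact mul_ne_zero hy (ne_of_gt hn)
  have hseq : ∀ y : ℝ, y ≠ 0 → Tendsto
      (fun n : ℕ => (psiF a ℓ (y * t n) - μ * (y * t n)) / t n ^ 2) atTop
      (𝓝 (y^2 * V / 2)) := by
    intro y hy
    have h2 := (tendsto_psi ℓ ha).comp (hcompf y hy)
    have h4 := h2.mul_const (y^2)
    have h5 : V / 2 * y^2 = y^2 * V / 2 := by ring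
    rw [h5] at h4
    refine h4.congr' ?_
    filter_upwards [htpos] with n hn
    have htn := ne_of_gt hn
    show (psiF a ℓ (y * t n) - μ * (y * t n)) / (y * t n)^2 * y^2 = _
    field_simp
  have hseqm : ∀ y : ℝ, y ≠ 0 → Tendsto
      (fun n : ℕ => (tmF a ℓ (y * t n) - μ) / t n) atTop (𝓝 (y * V)) := by
    intro y hy
    have h2 := (tendsto_tm ℓ ha).comp (hcompf y hy)
    have h4 := h2.mul_const y
    have h5 : V * y = y * V := by ring
    rw [h5] at h4
    refine h4.congr' ?_
    filter_upwards [htpos] with n hn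
    have htn := ne_of_gt hn
    show (tmF a ℓ (y * t n) - μ) / (y * t n) * y = _
    field_simp
  have key_lower : ∀ ε : ℝ, 0 < ε → ∀ᶠ n : ℕ in atTop,
      Real.exp ((n:ℝ) * psiF a ℓ (((x + ε/2)/V) * t n)
        - (((x + ε/2)/V) * t n) * ((n:ℝ) * μ + (x + ε) * (n:ℝ) * t n)) * (1/2) ≤ P n := by
    intro ε hε
    set y := (x + ε/2)/V with hydef
    have hy0 : 0 < y := div_pos (by linarith) hV
    have hyv : y * V = x + ε/2 := by
      rw [hydef, div_mul_cancel₀ _ hV.ne']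
    have hwin : ∀ᶠ n : ℕ in atTop,
        (tmF a ℓ (y * t n) - μ)/t n ∈ Set.Ioo (x + ε/4) (x + 3*ε/4) := by
      have h1 := hseqm y hy0.ne'
      rw [hyv] at h1
      exact h1.eventually (Ioo_mem_nhds (by linarith) (by linarith))
    have hcheb : ∀ᶠ n : ℕ in atTop,
        (n:ℝ) * tvF a ℓ (y * t n) / ((ε/4) * ((n:ℝ) * t n))^2 ≤ 1/2 := by
      have hbig := htop.eventually_ge_atTop (128 * (M^2+1) / ε^2)
      filter_upwards [hbig, htpos, hn1] with n hbn htn hn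
      have hv := tv_le ℓ ha (y * t n) hM
      have hvnn : 0 ≤ tvF a ℓ (y * t n) := by
        refine Finset.sum_nonneg fun i _ => mul_nonneg ((tilt_prob ℓ ha _).1 i) (sq_nonneg _)
      have hkey : 128*(M^2+1) ≤ ε^2 * ((n:ℝ) * t n^2) := by
        rw [div_le_iff₀ (by positivity)] at hbn
        linarith
      have hnpos : (0:ℝ) < (n:ℝ) := by linarith
      rw [div_le_iff₀ (by positivity)]
      nlinarith [mul_le_mul_of_nonneg_left hkey hnpos.le,
        mul_le_mul_of_nonneg_left hv hnpos.le, sq_nonneg (t n), sq_nonneg M]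
    filter_upwards [hwin, hcheb, htpos, hn1] with n hwn hcn htn hn
    have hnpos : (0:ℝ) < (n:ℝ) := by linarith
    have hlam : 0 ≤ y * t n := by positivity
    have hr : 0 < (ε/4) * ((n:ℝ) * t n) := by positivity
    have hw1' := (lt_div_iff₀ htn).1 hwn.1
    have hw2' := (div_lt_iff₀ htn).1 hwn.2
    refine lower_est ℓ ha hlam hr ?_ ?_ hcn
    · nlinarith [mul_le_mul_of_nonneg_left hw1'.le hnpos.le]
    · nlinarith [mul_le_mul_of_nonneg_left hw2'.le hnpos.le]
  have hPpos : ∀ᶠ n : ℕ in atTop, 0 < P n := by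
    filter_upwards [key_lower 1 one_pos] with n hn
    exact lt_of_lt_of_le (by positivity) hn
  -- lower bound on the log expression
  have hlog_lower : ∀ ε : ℝ, 0 < ε → ∀ᶠ n : ℕ in atTop,
      ((n:ℝ) * psiF a ℓ (((x + ε/2)/V) * t n)
        - (((x + ε/2)/V) * t n) * ((n:ℝ) * μ + (x + ε) * (n:ℝ) * t n) + Real.log (1/2))
        / ((n:ℝ) * t n ^ 2)
      ≤ Real.log (P n) / ((n:ℝ) * t n ^ 2) := by
    intro ε hε
    filter_upwards [key_lower ε hε, hnt] with n hkn hpn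
    have h0 : (0:ℝ) < Real.exp ((n:ℝ) * psiF a ℓ (((x + ε/2)/V) * t n)
        - (((x + ε/2)/V) * t n) * ((n:ℝ) * μ + (x + ε) * (n:ℝ) * t n)) * (1/2) := by
      positivity
    have hl := Real.log_le_log h0 hkn
    rw [Real.log_mul (Real.exp_ne_zero _) (by norm_num), Real.log_exp] at hl
    exact div_le_div_of_nonneg_right hl hpn.le |>.trans_eq rfl
  -- limit of the lower bound sequence
  have hlim_lower : ∀ ε : ℝ, 0 < ε → Tendsto (fun n : ℕ =>
      ((n:ℝ) * psiF a ℓ (((x + ε/2)/V) * t n)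
        - (((x + ε/2)/V) * t n) * ((n:ℝ) * μ + (x + ε) * (n:ℝ) * t n) + Real.log (1/2))
        / ((n:ℝ) * t n ^ 2)) atTop
      (𝓝 (((x + ε/2)/V)^2 * V / 2 - ((x + ε/2)/V) * (x + ε))) := by
    intro ε hε
    set y := (x + ε/2)/V with hydef
    have hy0 : 0 < y := div_pos (by linarith) hV
    have e1 := hseq y hy0.ne'
    have e2 : Tendsto (fun n : ℕ => Real.log (1/2) * ((n:ℝ) * t n ^ 2)⁻¹) atTop (𝓝 0) := by
      have h := htop.inv_tendsto_atTop
      simpa using h.const_mul (Real.log (1/2))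
    have e3 := (e1.sub_const (y * (x + ε))).add e2
    rw [add_zero] at e3
    refine e3.congr' ?_
    filter_upwards [htpos, hn1] with n htn hn
    have htn' := ne_of_gt htn
    have hnn : (n:ℝ) ≠ 0 := by positivity
    show (psiF a ℓ (y * t n) - μ * (y * t n)) / t n ^ 2 - y * (x + ε)
        + Real.log (1/2) * ((n:ℝ) * t n ^ 2)⁻¹ = _
    field_simp
    ring
  -- upper bound
  have hup : ∃ u : ℕ → ℝ, Tendsto u atTop (𝓝 (-x^2/(2*V)))
      ∧ ∀ᶠ n : ℕ in atTop, Real.log (P n) / ((n:ℝ) * t n ^ 2) ≤ u n := by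
    rcases eq_or_lt_of_le hx with hx0 | hxpos
    · refine ⟨fun _ => 0, by simp [← hx0], ?_⟩
      filter_upwards [hnt] with n hn
      exact div_nonpos_of_nonpos_of_nonneg (Real.log_nonpos (hPnn n) (hP1 n)) hn.le
    · set y := x/V with hydef
      have hy0 : 0 < y := div_pos hxpos hV
      refine ⟨fun n => (psiF a ℓ (y * t n) - μ * (y * t n)) / t n ^ 2 - y * x, ?_, ?_⟩
      · have := (hseq y hy0.ne').sub_const (y * x)
        have hval : y^2 * V / 2 - y * x = -x^2/(2*V) := by
          have hV' : V ≠ 0 := hV.ne'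
          rw [hydef]
          field_simp
          ring
        rwa [hval] at this
      · filter_upwards [hPpos, htpos, hnt, hn1] with n hpn htn hntn hn
        have hch := chernoff ℓ ha (lam := y * t n) (by positivity) n
          ((n:ℝ) * μ + x * (n:ℝ) * t n)
        have hlog : Real.log (P n) ≤ (n:ℝ) * psiF a ℓ (y * t n)
            - (y * t n) * ((n:ℝ) * μ + x * (n:ℝ) * t n) := by
          have := Real.log_le_log hpn hch
          rwa [Real.log_exp] at this
        have hstep := div_le_div_of_nonneg_right hlog hntn.le
        refine hstep.trans_eq ?_
        have htn' := ne_of_gt htn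
        have hnn : (n:ℝ) ≠ 0 := by positivity
        field_simp
        ring
  -- assemble
  obtain ⟨u, hu, hule⟩ := hup
  rw [Metric.tendsto_nhds]
  intro δ hδ
  have hx1 : (0:ℝ) < x + 1 := by linarith
  set ε := min 1 (δ*V/(4*(x+1))) with hεdef
  have hε : 0 < ε := lt_min one_pos (by positivity)
  have hε1 : ε ≤ 1 := min_le_left _ _
  have hε2 : ε ≤ δ*V/(4*(x+1)) := min_le_right _ _
  set Cε := ((x + ε/2)/V)^2 * V / 2 - ((x + ε/2)/V) * (x + ε) with hCdef
  have hCL : -x^2/(2*V) - δ/2 < Cε := by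
    have halg : ∀ e v : ℝ, v ≠ 0 →
        ((x + e/2)/v)^2 * v / 2 - ((x + e/2)/v) * (x + e)
          = -x^2/(2*v) - (x*e + 3*e^2/8)/v := by
      intro e v hv
      field_simp
      ring
    have hCe : Cε = -x^2/(2*V) - (x*ε + 3*ε^2/8)/V := by
      rw [hCdef]
      exact halg ε V hV.ne'
    have hnum : x*ε + 3*ε^2/8 ≤ ε*(x+1) := by nlinarith
    rw [le_div_iff₀ (by positivity)] at hε2
    have h3 : (x*ε + 3*ε^2/8)/V ≤ δ/4 := by
      rw [div_le_iff₀ hV]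
      nlinarith
    rw [hCe]
    linarith
  have hev1 := (hlim_lower ε hε).eventually_const_lt hCL
  have hev2 := hu.eventually_lt_const (show -x^2/(2*V) < -x^2/(2*V) + δ/2 by linarith)
  filter_upwards [hev1, hev2, hlog_lower ε hε, hule] with n h1 h2 h3 h4
  rw [Real.dist_eq, abs_sub_lt_iff]
  constructor
  · have := h4.trans_lt h2
    linarith
  · have := h1.trans_le h3
    linarith

end Main


end MDAux

/-- Magnitude-based tail bound for tensor powers of a distribution, in the moderate
deviation regime. -/
theorem magnitude_tail_bound
    {d : ℕ} (a : Fin d → ℝ) (ha : IsProbDist a) (hVa : 0 < entV a)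
    (t : ℕ → ℝ) (ht : ModerateSeq t)
    (k : ℕ → ℝ → ℝ)
    (hk : ∀ n : ℕ, ∀ x : ℝ, k n x = Real.exp ((n : ℝ) * shannonH a + x * n * t n)) :
    (∀ x ≤ (0 : ℝ), Tendsto (fun n : ℕ =>
        Real.log (∑ f ∈ Finset.univ.filter
            (fun f : Fin n → Fin d => 1 / k n x ≤ tpow a n f), tpow a n f) /
          ((n : ℝ) * t n ^ 2))
      atTop (𝓝 (-x ^ 2 / (2 * entV a)))) ∧
    (∀ x ≥ (0 : ℝ), Tendsto (fun n : ℕ =>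
        Real.log (∑ f ∈ Finset.univ.filter
            (fun f : Fin n → Fin d => tpow a n f ≤ 1 / k n x), tpow a n f) /
          ((n : ℝ) * t n ^ 2))
      atTop (𝓝 (-x ^ 2 / (2 * entV a)))) := by
  obtain ⟨ht0, htinf⟩ := ht
  have htpos : ∀ᶠ n in atTop, 0 < t n := by
    filter_upwards [htinf.eventually_ge_atTop 1] with n h1
    by_contra hle
    push_neg at hle
    have := mul_nonpos_of_nonneg_of_nonpos (Real.sqrt_nonneg ((n:ℕ):ℝ)) hle
    linarith
  have htop : Tendsto (fun n : ℕ => (n:ℝ) * t n ^ 2) atTop atTop := by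
    have h2 := (tendsto_pow_atTop (two_ne_zero)).comp htinf
    refine h2.congr fun n => ?_
    show (Real.sqrt (n:ℝ) * t n)^2 = _
    rw [mul_pow, Real.sq_sqrt (Nat.cast_nonneg n)]
  have hmu1 : MDAux.muF a (fun i => Real.log (a i)) = -shannonH a := by
    simp [MDAux.muF, shannonH]
  have hV1 : MDAux.VF a (fun i => Real.log (a i)) = entV a := by
    unfold MDAux.VF entV
    rw [hmu1]
    exact Finset.sum_congr rfl fun i _ => by rw [sub_neg_eq_add]
  have hmu2 : MDAux.muF a (fun i => -Real.log (a i)) = shannonH a := by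
    simp [MDAux.muF, shannonH, mul_neg]
  have hV2 : MDAux.VF a (fun i => -Real.log (a i)) = entV a := by
    unfold MDAux.VF entV
    rw [hmu2]
    refine Finset.sum_congr rfl fun i _ => ?_
    rw [show -Real.log (a i) - shannonH a = -(Real.log (a i) + shannonH a) by ring, neg_sq]
  have hposf : ∀ {n : ℕ} (f : Fin n → Fin d), tpow a n f ≠ 0 → ∀ j, 0 < a (f j) := by
    intro n f hf j
    rcases (ha.1 (f j)).lt_or_eq with h | h
    · exact h
    · exact absurd (Finset.prod_eq_zero (Finset.mem_univ j) h.symm) hf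
  have hexpf : ∀ {n : ℕ} (f : Fin n → Fin d), tpow a n f ≠ 0 →
      tpow a n f = Real.exp (∑ j, Real.log (a (f j))) := by
    intro n f hf
    rw [Real.exp_sum]
    exact Finset.prod_congr rfl fun j _ => (Real.exp_log (hposf f hf j)).symm
  constructor
  · intro x hx
    have hmain := MDAux.tail_main (a := a) (fun i => Real.log (a i)) ha (hV1 ▸ hVa) t ht0 htpos htop
      (-x) (by linarith)
    rw [hV1, neg_sq] at hmain
    refine hmain.congr fun n => ?_
    have hs := MDAux.sum_filter_congr_zero (tpow a n)
      (fun f : Fin n → Fin d =>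
        (n:ℝ) * MDAux.muF a (fun i => Real.log (a i)) + -x * (n:ℝ) * t n
          ≤ ∑ j, Real.log (a (f j)))
      (fun f : Fin n → Fin d => 1 / k n x ≤ tpow a n f) ?_
    · exact congrArg (fun z => Real.log z / ((n:ℝ) * t n ^ 2)) hs
    · intro f hf
      show (n:ℝ) * MDAux.muF a (fun i => Real.log (a i)) + -x * (n:ℝ) * t n
          ≤ ∑ j, Real.log (a (f j)) ↔ 1 / k n x ≤ tpow a n f
      rw [hexpf f hf, hk n x, one_div, ← Real.exp_neg, Real.exp_le_exp, hmu1]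
      constructor <;> intro h <;> linarith
  · intro x hx
    have hmain := MDAux.tail_main (a := a) (fun i => -Real.log (a i)) ha (hV2 ▸ hVa) t ht0 htpos htop
      x hx
    rw [hV2] at hmain
    refine hmain.congr fun n => ?_
    have hs := MDAux.sum_filter_congr_zero (tpow a n)
      (fun f : Fin n → Fin d =>
        (n:ℝ) * MDAux.muF a (fun i => -Real.log (a i)) + x * (n:ℝ) * t n
          ≤ ∑ j, -Real.log (a (f j)))
      (fun f : Fin n → Fin d => tpow a n f ≤ 1 / k n x) ?_
    · exact congrArg (fun z => Real.log z / ((n:ℝ) * t n ^ 2)) hs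
    · intro f hf
      show (n:ℝ) * MDAux.muF a (fun i => -Real.log (a i)) + x * (n:ℝ) * t n
          ≤ ∑ j, -Real.log (a (f j)) ↔ tpow a n f ≤ 1 / k n x
      rw [hexpf f hf, hk n x, one_div, ← Real.exp_neg, Real.exp_le_exp, hmu2]
      have hsum : ∑ j, -Real.log (a (f j)) = -∑ j, Real.log (a (f j)) := by
        rw [Finset.sum_neg_distrib]
      rw [hsum]
      constructor <;> intro h <;> linarith
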